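/- Let X and Y be metric spaces, x₀ ∈ X, f : X → Y, and let α ≥ 1, λ ≥ 1, c ≥ 0, R > 0. Assume: (i) there is a finite subset S of the closed ball B(x₀,R) in X whose points are pairwise at distance ≥ 2(c+λ+1) and whose cardinality is at least exp(R − 2(c+λ+1)); (ii) for every y ∈ Y and every ρ ≥ 1, every subset of the closed ball B(y,ρ) in Y whose points are pairwise at distance ≥ 1 is finite of cardinality at most ρ^α; (iii) for all x, x' ∈ B(x₀,R), dist(f x, f x') ≤ λ·dist(x,x') + c and dist(x,x') ≤ λ·dist(f x, f x') + c. Then R ≤ 2c + 2λ + 2 + α·log(λR + c + 1). -/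
import Mathlib


open Metric Real

theorem stmt_0
    {X Y : Type*} [MetricSpace X] [MetricSpace Y]
    (x₀ : X) (f : X → Y) (α lam c R : ℝ)
    (hα : 1 ≤ α) (hlam : 1 ≤ lam) (hc : 0 ≤ c) (hR : 0 < R)
    -- (i) exponential growth of X: a large separated set in B(x₀,R)
    (hexp : ∃ S : Finset X,
      (∀ x ∈ S, x ∈ closedBall x₀ R) ∧
      (∀ x ∈ S, ∀ y ∈ S, x ≠ y → 2 * (c + lam + 1) ≤ dist x y) ∧
      Real.exp (R - 2 * (c + lam + 1)) ≤ (S.card : ℝ))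
    -- (ii) polynomial growth of Y: packing bounds
    (hpoly : ∀ (y : Y) (ρ : ℝ), 1 ≤ ρ → ∀ T : Set Y,
      T ⊆ closedBall y ρ → (T.Pairwise fun a b => 1 ≤ dist a b) →
      T.Finite ∧ (T.ncard : ℝ) ≤ ρ ^ α)
    -- (iii) f is a (λ,c)-quasi-isometric embedding on B(x₀,R)
    (hqi : ∀ x ∈ closedBall x₀ R, ∀ x' ∈ closedBall x₀ R,
      dist (f x) (f x') ≤ lam * dist x x' + c ∧
      dist x x' ≤ lam * dist (f x) (f x') + c) :
    R ≤ 2 * c + 2 * lam + 2 + α * Real.log (lam * R + c + 1) := by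
  obtain ⟨S, hS1, hS2, hS3⟩ := hexp
  set ρ : ℝ := lam * R + c + 1 with hρdef
  have hρ : 1 ≤ ρ := by nlinarith
  have hx₀ : x₀ ∈ closedBall x₀ R := by
    simp [hR.le]
  -- separation of images
  have hsep : ∀ x ∈ S, ∀ y ∈ S, x ≠ y → 1 ≤ dist (f x) (f y) := by
    intro x hx y hy hxy
    have h1 := hS2 x hx y hy hxy
    have h2 := (hqi x (hS1 x hx) y (hS1 y hy)).2
    nlinarith [dist_nonneg (x := f x) (y := f y)]
  have hT : (f '' (S : Set X)) ⊆ closedBall (f x₀) ρ := by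
    rintro _ ⟨x, hx, rfl⟩
    have h1 := (hqi x (hS1 x hx) x₀ hx₀).1
    have h2 : dist x x₀ ≤ R := hS1 x hx
    simp only [mem_closedBall]
    nlinarith
  have hTpair : (f '' (S : Set X)).Pairwise fun a b => 1 ≤ dist a b := by
    rintro _ ⟨x, hx, rfl⟩ _ ⟨y, hy, rfl⟩ hne
    exact hsep x hx y hy (fun h => hne (by rw [h]))
  obtain ⟨_, hcard⟩ := hpoly (f x₀) ρ hρ _ hT hTpair
  have hinj : Set.InjOn f (S : Set X) := by
    intro x hx y hy hfe
    by_contra hne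
    have := hsep x hx y hy hne
    rw [hfe] at this
    simp at this
    linarith
  have hncard : (f '' (S : Set X)).ncard = S.card := by
    rw [Set.ncard_image_of_injOn hinj, Set.ncard_coe_finset]
  rw [hncard] at hcard
  have hρpos : (0:ℝ) < ρ := by linarith
  have hrw : ρ ^ α = Real.exp (α * Real.log ρ) := by
    rw [Real.rpow_def_of_pos hρpos, mul_comm]
  have : Real.exp (R - 2 * (c + lam + 1)) ≤ Real.exp (α * Real.log ρ) := by
    rw [← hrw]; exact le_trans hS3 hcard
  have := Real.exp_le_exp.mp this
  linarith
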